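/- Not_POLY example: Let I = fn x=>x and Not_POLY = fn p => p False True (fn f=>fn g=>(g I I I) f). Then (i) Not_POLY is poly-typable by B_HM -> B_HM with respect to True and with respect to False, so that Not_POLY True and Not_POLY False are well-typed closed terms of type B_HM; (ii) Not_POLY True =βηc False and Not_POLY False =βηc True; and (iii) ⊢ Not_POLY : B_HM -> B_HM is not derivable. -/

import Mathlib

/-! Linear λ-calculus preamble -/

/-- Types of the linear λ-calculus: type variables, tensor product, linear implication. -/
inductive Ty : Type
  | tvar : ℕ → Ty
  | tensor : Ty → Ty → Ty
  | arrow : Ty → Ty → Ty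
deriving DecidableEq

/-- Terms of the linear λ-calculus. -/
inductive Tm : Type
  | var : ℕ → Tm
  | app : Tm → Tm → Tm
  | lam : ℕ → Tm → Tm
  | pair : Tm → Tm → Tm
  | letp : ℕ → ℕ → Tm → Tm → Tm
deriving DecidableEq

/-- Free variables of a term. -/
def Tm.fv : Tm → Finset ℕ
  | .var x => {x}
  | .app t s => t.fv ∪ s.fv
  | .lam x t => t.fv \ {x}
  | .pair t s => t.fv ∪ s.fv
  | .letp x y s t => s.fv ∪ (t.fv \ {x, y})

/-- Substitution of a term for a variable. -/
def Tm.subst : Tm → ℕ → Tm → Tm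
  | .var y, x, s => if y = x then s else .var y
  | .app t u, x, s => .app (t.subst x s) (u.subst x s)
  | .lam y t, x, s => if y = x then .lam y t else .lam y (t.subst x s)
  | .pair t u, x, s => .pair (t.subst x s) (u.subst x s)
  | .letp y z u t, x, s =>
      .letp y z (u.subst x s) (if x = y ∨ x = z then t else t.subst x s)

/-- Typing contexts: finite lists of typed variables. -/
abbrev Ctxt := List (ℕ × Ty)

/-- The linear type assignment system. -/
inductive Typed : Ctxt → Tm → Ty → Prop
  | var (x : ℕ) (A : Ty) : Typed [(x, A)] (.var x) A
  | exch (Γ Δ : Ctxt) (x y : ℕ) (A B : Ty) (t : Tm) (C : Ty) :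
      Typed (Γ ++ (x, A) :: (y, B) :: Δ) t C →
      Typed (Γ ++ (y, B) :: (x, A) :: Δ) t C
  | lam (x : ℕ) (A : Ty) (Γ : Ctxt) (t : Tm) (B : Ty) :
      Typed ((x, A) :: Γ) t B → Typed Γ (.lam x t) (.arrow A B)
  | app (Γ Δ : Ctxt) (t s : Tm) (A B : Ty) :
      Typed Γ t (.arrow A B) → Typed Δ s A → Typed (Γ ++ Δ) (.app t s) B
  | pair (Γ Δ : Ctxt) (s t : Tm) (A B : Ty) :
      Typed Γ s A → Typed Δ t B → Typed (Γ ++ Δ) (.pair s t) (.tensor A B)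
  | letp (Γ Δ : Ctxt) (s t : Tm) (x y : ℕ) (A B C : Ty) :
      Typed Γ s (.tensor A B) → Typed ((x, A) :: (y, B) :: Δ) t C →
      Typed (Γ ++ Δ) (.letp x y s t) C

/-- One-hole contexts. -/
inductive Cx : Type
  | hole : Cx
  | appL : Cx → Tm → Cx
  | appR : Tm → Cx → Cx
  | pairL : Cx → Tm → Cx
  | pairR : Tm → Cx → Cx
  | lam : ℕ → Cx → Cx
  | letL : ℕ → ℕ → Cx → Tm → Cx
  | letR : ℕ → ℕ → Tm → Cx → Cx

/-- Plugging a term into a one-hole context. -/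
def Cx.plug : Cx → Tm → Tm
  | .hole, u => u
  | .appL C t, u => .app (C.plug u) t
  | .appR t C, u => .app t (C.plug u)
  | .pairL C t, u => .pair (C.plug u) t
  | .pairR t C, u => .pair t (C.plug u)
  | .lam x C, u => .lam x (C.plug u)
  | .letL x y C t, u => .letp x y (C.plug u) t
  | .letR x y t C, u => .letp x y t (C.plug u)

/-- Variables captured by a context. -/
def Cx.cv : Cx → Finset ℕ
  | .hole => ∅
  | .appL C _ => C.cv
  | .appR _ C => C.cv
  | .pairL C _ => C.cv
  | .pairR _ C => C.cv
  | .lam x C => insert x C.cv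
  | .letL _ _ C _ => C.cv
  | .letR x y _ C => insert x (insert y C.cv)

/-- Free variables of a context. -/
def Cx.fv : Cx → Finset ℕ
  | .hole => ∅
  | .appL C t => C.fv ∪ t.fv
  | .appR t C => t.fv ∪ C.fv
  | .pairL C t => C.fv ∪ t.fv
  | .pairR t C => t.fv ∪ C.fv
  | .lam x C => C.fv \ {x}
  | .letL x y C t => C.fv ∪ (t.fv \ {x, y})
  | .letR x y t C => t.fv ∪ (C.fv \ {x, y})

/-- The base βη-reduction rules. -/
inductive StepBase : Tm → Tm → Prop
  | beta1 (x : ℕ) (t s : Tm) : StepBase (.app (.lam x t) s) (t.subst x s)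
  | beta2 (x y : ℕ) (u v w : Tm) :
      StepBase (.letp x y (.pair u v) w) ((w.subst x u).subst y v)
  | eta1 (x : ℕ) (t : Tm) : x ∉ t.fv → StepBase (.lam x (.app t (.var x))) t
  | eta2 (x y : ℕ) (t : Tm) : x ≠ y → x ∉ t.fv → y ∉ t.fv →
      StepBase (.letp x y t (.pair (.var x) (.var y))) t

/-- Closure of a relation under arbitrary one-hole contexts. -/
def Congr (R : Tm → Tm → Prop) (t u : Tm) : Prop :=
  ∃ (C : Cx) (a b : Tm), R a b ∧ t = C.plug a ∧ u = C.plug b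

/-- One-step βη-reduction (congruent closure of the base rules): →βη. -/
def Step : Tm → Tm → Prop := Congr StepBase

/-- The base commutative conversion rule ↔c. -/
def CommBase (t u : Tm) : Prop :=
  ∃ (C : Cx) (x y : ℕ) (s w : Tm),
    x ∉ C.fv ∧ y ∉ C.fv ∧ (∀ z ∈ C.cv, z ∉ s.fv) ∧
    t = C.plug (.letp x y s w) ∧ u = .letp x y s (C.plug w)

/-- The congruent equivalence relation =c generated by ↔c. -/
def Ceq : Tm → Tm → Prop := Relation.EqvGen (Congr CommBase)

/-- One-step reduction modulo commutative conversion: →βηc. -/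
def StepC (t u : Tm) : Prop := ∃ t' u', Ceq t t' ∧ Step t' u' ∧ Ceq u' u

/-- The equality =βηc : the least congruent equivalence relation containing ↔c and →βηc. -/
def BEqc : Tm → Tm → Prop :=
  Relation.EqvGen (Congr (fun a b => CommBase a b ∨ StepC a b))

/-- Type substitutions and their action on types. -/
def Ty.subst : Ty → (ℕ → Ty) → Ty
  | .tvar a, θ => θ a
  | .tensor A B, θ => .tensor (A.subst θ) (B.subst θ)
  | .arrow A B, θ => .arrow (A.subst θ) (B.subst θ)

/-- Action of a type substitution on a typing context. -/
def CtxtSubst (Γ : Ctxt) (θ : ℕ → Ty) : Ctxt := Γ.map (fun p => (p.1, p.2.subst θ))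

/-- `A` is the principal type of the closed term `t`. -/
def IsPT (t : Tm) (A : Ty) : Prop :=
  Typed [] t A ∧ ∀ A', Typed [] t A' → ∃ θ, A' = A.subst θ

/-- Iterated linear implication `A1->...->An->B`. -/
def arrows (As : List Ty) (B : Ty) : Ty := As.foldr .arrow B

/-- Iterated application `t s1 ⋯ sn`. -/
def apps (t : Tm) (ss : List Tm) : Tm := ss.foldl .app t

/-- `t` is poly-typable by `A1->...->An->B` with respect to closed terms `s1,...,sn`
of types `A1,...,An`. -/
def PolyTypableN (t : Tm) (As : List Ty) (B : Ty) (ss : List Tm) : Prop :=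
  (∃ (As' : List Ty) (B' : Ty), As'.length = As.length ∧ Typed [] t (arrows As' B')) ∧
  List.Forall₂ (fun s A => Typed [] s A) ss As ∧
  ∃ (θ : ℕ → Ty) (PTt : Ty) (As'' : List Ty),
    IsPT t PTt ∧ PTt.subst θ = arrows As'' B ∧
    List.Forall₂ (fun s A'' => ∃ P, IsPT s P ∧ P.subst θ = A'') ss As''


/-- `B_HM = 'a->'a->('a->'a->'a)->'a`. -/
def BHM : Ty :=
  .arrow (.tvar 0)
    (.arrow (.tvar 0)
      (.arrow (.arrow (.tvar 0) (.arrow (.tvar 0) (.tvar 0))) (.tvar 0)))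

/-- `True = fn x=>fn y=>fn z=>z x y`. -/
def TrueHM : Tm :=
  .lam 0 (.lam 1 (.lam 2 (.app (.app (.var 2) (.var 0)) (.var 1))))

/-- `False = fn x=>fn y=>fn z=>z y x`. -/
def FalseHM : Tm :=
  .lam 0 (.lam 1 (.lam 2 (.app (.app (.var 2) (.var 1)) (.var 0))))

/-- `I = fn x=>x`. -/
def ITm : Tm := .lam 0 (.var 0)

/-- `Not_POLY = fn p => p False True (fn f=>fn g=>(g I I I) f)`. -/
def NotPoly : Tm :=
  .lam 5 (.app (.app (.app (.var 5) FalseHM) TrueHM)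
    (.lam 3 (.lam 4
      (.app (.app (.app (.app (.var 4) ITm) ITm) ITm) (.var 3)))))


/-! ### Auxiliary machinery -/

/-- Occurrence list of free variables. -/
def vl : Tm → List ℕ
  | .var x => [x]
  | .app t s => vl t ++ vl s
  | .lam x t => (vl t).erase x
  | .pair t s => vl t ++ vl s
  | .letp x y s t => vl s ++ (((vl t).erase x).erase y)

/-- Permutation-based presentation of the linear typing judgement. -/
inductive T : Ctxt → Tm → Ty → Prop
  | var (x : ℕ) (A : Ty) : T [(x,A)] (.var x) A
  | lam {x A Γ t B} : T ((x,A)::Γ) t B → T Γ (.lam x t) (.arrow A B)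
  | app {Γ Γ₁ Γ₂ t s A B} : Γ.Perm (Γ₁++Γ₂) → T Γ₁ t (.arrow A B) → T Γ₂ s A →
      T Γ (.app t s) B
  | pair {Γ Γ₁ Γ₂ s t A B} : Γ.Perm (Γ₁++Γ₂) → T Γ₁ s A → T Γ₂ t B →
      T Γ (.pair s t) (.tensor A B)
  | letp {Γ Γ₁ Γ₂ s t x y A B C} : Γ.Perm (Γ₁++Γ₂) → T Γ₁ s (.tensor A B) →
      T ((x,A)::(y,B)::Γ₂) t C → T Γ (.letp x y s t) C

theorem T.perm {Γ t A} (h : T Γ t A) : ∀ {Δ}, Γ.Perm Δ → T Δ t A := by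
  induction h with
  | var x A => intro Δ hp; rw [List.perm_singleton.mp hp.symm]; exact T.var x A
  | lam h ih => intro Δ hp; exact T.lam (ih (List.Perm.cons _ hp))
  | app hp h1 h2 ih1 ih2 => intro Δ hpd; exact T.app (hpd.symm.trans hp) h1 h2
  | pair hp h1 h2 ih1 ih2 => intro Δ hpd; exact T.pair (hpd.symm.trans hp) h1 h2
  | letp hp h1 h2 ih1 ih2 => intro Δ hpd; exact T.letp (hpd.symm.trans hp) h1 h2

theorem typed_perm_aux : ∀ {l l' : Ctxt}, l.Perm l' →
    ∀ Γ t A, Typed (Γ++l) t A → Typed (Γ++l') t A := by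
  intro l l' h
  induction h with
  | nil => exact fun Γ t A h => h
  | cons x _ ih =>
      intro Γ t A ht
      have := ih (Γ++[x]) t A (by simpa using ht)
      simpa using this
  | swap p q m =>
      intro Γ t A ht
      exact Typed.exch Γ m q.1 p.1 q.2 p.2 t A ht
  | trans _ _ ih1 ih2 => intro Γ t A ht; exact ih2 Γ t A (ih1 Γ t A ht)

theorem Typed.perm {Γ Δ t A} (h : Typed Γ t A) (hp : Γ.Perm Δ) : Typed Δ t A := by
  have := typed_perm_aux hp [] t A
  simpa using this h

theorem typed_of_T {Γ t A} (h : T Γ t A) : Typed Γ t A := by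
  induction h with
  | var x A => exact Typed.var x A
  | lam h ih => exact Typed.lam _ _ _ _ _ ih
  | app hp h1 h2 ih1 ih2 => exact (Typed.app _ _ _ _ _ _ ih1 ih2).perm hp.symm
  | pair hp h1 h2 ih1 ih2 => exact (Typed.pair _ _ _ _ _ _ ih1 ih2).perm hp.symm
  | letp hp h1 h2 ih1 ih2 => exact (Typed.letp _ _ _ _ _ _ _ _ _ ih1 ih2).perm hp.symm

theorem T_of_typed {Γ t A} (h : Typed Γ t A) : T Γ t A := by
  induction h with
  | var x A => exact T.var x A
  | exch Γ Δ x y A B t C h ih =>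
      exact ih.perm (List.Perm.append_left Γ (List.Perm.swap _ _ _))
  | lam x A Γ t B h ih => exact T.lam ih
  | app Γ Δ t s A B h1 h2 ih1 ih2 => exact T.app (List.Perm.refl _) ih1 ih2
  | pair Γ Δ s t A B h1 h2 ih1 ih2 => exact T.pair (List.Perm.refl _) ih1 ih2
  | letp Γ Δ s t x y A B C h1 h2 ih1 ih2 => exact T.letp (List.Perm.refl _) ih1 ih2

theorem T_keys {Γ t A} (h : T Γ t A) : (Γ.map Prod.fst).Perm (vl t) := by
  induction h with
  | var x A => simp [vl]
  | lam h ih =>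
      have := (List.cons_perm_iff_perm_erase.mp ih).2
      simpa [vl] using this
  | app hp h1 h2 ih1 ih2 =>
      refine ((hp.map Prod.fst).trans ?_)
      simpa [vl] using (List.Perm.append ih1 ih2)
  | pair hp h1 h2 ih1 ih2 =>
      refine ((hp.map Prod.fst).trans ?_)
      simpa [vl] using (List.Perm.append ih1 ih2)
  | letp hp h1 h2 ih1 ih2 =>
      refine ((hp.map Prod.fst).trans ?_)
      have e1 := (List.cons_perm_iff_perm_erase.mp ih2).2
      have e2 := (List.cons_perm_iff_perm_erase.mp e1).2
      · simp only [vl, List.map_append]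
        refine List.Perm.append ih1 ?_
        simpa using e2

theorem T_var_inv {Γ x A} (h : T Γ (.var x) A) : Γ = [(x,A)] := by
  cases h; rfl

theorem T_lam_inv {Γ x t C} (h : T Γ (.lam x t) C) :
    ∃ A B, C = .arrow A B ∧ T ((x,A)::Γ) t B := by
  cases h with | lam h => exact ⟨_, _, rfl, h⟩

theorem T_app_inv {Γ t s B} (h : T Γ (.app t s) B) :
    ∃ Γ₁ Γ₂ A, Γ.Perm (Γ₁++Γ₂) ∧ T Γ₁ t (.arrow A B) ∧ T Γ₂ s A := by
  cases h with | app hp h1 h2 => exact ⟨_, _, _, hp, h1, h2⟩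

theorem T_nil {Γ t A} (h : T Γ t A) (hc : vl t = []) : Γ = [] := by
  have hk := T_keys h
  rw [hc] at hk
  have := hk.eq_nil
  simpa using this

theorem T_app_closed {Γ t s B} (h : T Γ (.app t s) B) (hc : vl s = []) :
    ∃ A, T Γ t (.arrow A B) ∧ T [] s A := by
  obtain ⟨Γ₁, Γ₂, A, hp, h1, h2⟩ := T_app_inv h
  have h2n : Γ₂ = [] := T_nil h2 hc
  subst h2n
  exact ⟨A, h1.perm (by simpa using hp.symm), by simpa using h2⟩

theorem T_app_var {Γ t x B} (h : T Γ (.app t (.var x)) B) :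
    ∃ X Γ₁, Γ.Perm ((x,X)::Γ₁) ∧ T Γ₁ t (.arrow X B) := by
  obtain ⟨Γ₁, Γ₂, A, hp, h1, h2⟩ := T_app_inv h
  rw [T_var_inv h2] at hp
  exact ⟨A, Γ₁, hp.trans (List.perm_append_singleton _ _), h1⟩

theorem T_I_inv {Γ C} (h : T Γ ITm C) : Γ = [] ∧ ∃ X, C = .arrow X X := by
  obtain ⟨A, B, rfl, h1⟩ := T_lam_inv h
  have hv := T_var_inv h1
  simp only [List.cons.injEq, Prod.mk.injEq] at hv
  obtain ⟨⟨-, rfl⟩, rfl⟩ := hv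
  exact ⟨rfl, A, rfl⟩

theorem T_true_inv {C} (h : T [] TrueHM C) :
    ∃ a b c, C = .arrow a (.arrow b (.arrow (.arrow a (.arrow b c)) c)) := by
  obtain ⟨A0, B0, rfl, h0⟩ := T_lam_inv h
  obtain ⟨A1, B1, rfl, h1⟩ := T_lam_inv h0
  obtain ⟨A2, B2, rfl, h2⟩ := T_lam_inv h1
  obtain ⟨X, Γ₁, hp, h3⟩ := T_app_var h2
  have hm : ((1:ℕ),X) ∈ ([(2,A2),(1,A1),(0,A0)] : Ctxt) :=
    hp.symm.subset List.mem_cons_self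
  simp at hm
  obtain rfl := hm.symm
  have hp2 : Γ₁.Perm [(2,A2),(0,A0)] :=
    (hp.symm.trans (List.Perm.swap _ _ _)).cons_inv
  have h4 := h3.perm hp2
  obtain ⟨Y, Γ₂, hp', h5⟩ := T_app_var h4
  have hm' : ((0:ℕ),Y) ∈ ([(2,A2),(0,A0)] : Ctxt) :=
    hp'.symm.subset List.mem_cons_self
  simp at hm'
  obtain rfl := hm'.symm
  have hp3 : Γ₂.Perm [(2,A2)] :=
    (hp'.symm.trans (List.Perm.swap _ _ _)).cons_inv
  have h6 := h5.perm hp3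
  have hv := T_var_inv h6
  simp only [List.cons.injEq, Prod.mk.injEq] at hv
  obtain ⟨⟨-, rfl⟩, -⟩ := hv
  exact ⟨A0, A1, B2, rfl⟩

theorem T_false_inv {C} (h : T [] FalseHM C) :
    ∃ a b c, C = .arrow a (.arrow b (.arrow (.arrow b (.arrow a c)) c)) := by
  obtain ⟨A0, B0, rfl, h0⟩ := T_lam_inv h
  obtain ⟨A1, B1, rfl, h1⟩ := T_lam_inv h0
  obtain ⟨A2, B2, rfl, h2⟩ := T_lam_inv h1
  obtain ⟨X, Γ₁, hp, h3⟩ := T_app_var h2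
  have hm : ((0:ℕ),X) ∈ ([(2,A2),(1,A1),(0,A0)] : Ctxt) :=
    hp.symm.subset List.mem_cons_self
  simp at hm
  obtain rfl := hm.symm
  have hp2 : Γ₁.Perm [(2,A2),(1,A1)] := by
    have p : ([(2,A2),(1,A1),(0,A0)] : Ctxt).Perm ((0,A0)::[(2,A2),(1,A1)]) :=
      (List.Perm.cons _ (List.Perm.swap _ _ _)).trans (List.Perm.swap _ _ _)
    exact (hp.symm.trans p).cons_inv
  have h4 := h3.perm hp2
  obtain ⟨Y, Γ₂, hp', h5⟩ := T_app_var h4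
  have hm' : ((1:ℕ),Y) ∈ ([(2,A2),(1,A1)] : Ctxt) :=
    hp'.symm.subset List.mem_cons_self
  simp at hm'
  obtain rfl := hm'.symm
  have hp3 : Γ₂.Perm [(2,A2)] :=
    (hp'.symm.trans (List.Perm.swap _ _ _)).cons_inv
  have h6 := h5.perm hp3
  have hv := T_var_inv h6
  simp only [List.cons.injEq, Prod.mk.injEq] at hv
  obtain ⟨⟨-, rfl⟩, -⟩ := hv
  exact ⟨A0, A1, B2, rfl⟩

/-- `fn f=>fn g=>(g I I I) f`. -/
def GTm : Tm :=
  .lam 3 (.lam 4 (.app (.app (.app (.app (.var 4) ITm) ITm) ITm) (.var 3)))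

theorem T_G_inv {C} (h : T [] GTm C) :
    ∃ F c1 c2 c3 R, C = .arrow F (.arrow
      (.arrow (.arrow c1 c1) (.arrow (.arrow c2 c2) (.arrow (.arrow c3 c3) (.arrow F R)))) R) := by
  obtain ⟨F, B0, rfl, g0⟩ := T_lam_inv h
  obtain ⟨Gt, R, rfl, g1⟩ := T_lam_inv g0
  obtain ⟨X, Γ₁, hp, g2⟩ := T_app_var g1
  have hm : ((3:ℕ),X) ∈ ([(4,Gt),(3,F)] : Ctxt) :=
    hp.symm.subset List.mem_cons_self
  simp at hm
  obtain rfl := hm.symm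
  have hp2 : Γ₁.Perm [(4,Gt)] :=
    (hp.symm.trans (List.Perm.swap _ _ _)).cons_inv
  have g3 := g2.perm hp2
  obtain ⟨X3, g4, hI3⟩ := T_app_closed g3 (by decide)
  obtain ⟨X2, g5, hI2⟩ := T_app_closed g4 (by decide)
  obtain ⟨X1, g6, hI1⟩ := T_app_closed g5 (by decide)
  have hv := T_var_inv g6
  simp only [List.cons.injEq, Prod.mk.injEq] at hv
  obtain ⟨⟨-, rfl⟩, -⟩ := hv
  obtain ⟨-, c1, rfl⟩ := T_I_inv hI1
  obtain ⟨-, c2, rfl⟩ := T_I_inv hI2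
  obtain ⟨-, c3, rfl⟩ := T_I_inv hI3
  exact ⟨F, c1, c2, c3, R, rfl⟩

theorem T_notPoly_inv {C} (h : T [] NotPoly C) :
    ∃ AF AT AG R, C = .arrow (.arrow AF (.arrow AT (.arrow AG R))) R ∧
      T [] FalseHM AF ∧ T [] TrueHM AT ∧ T [] GTm AG := by
  replace h : T [] (.lam 5 (.app (.app (.app (.var 5) FalseHM) TrueHM) GTm)) C := h
  obtain ⟨P, R, rfl, n0⟩ := T_lam_inv h
  obtain ⟨AG, n1, hG⟩ := T_app_closed n0 (by decide)
  obtain ⟨AT, n2, hT⟩ := T_app_closed n1 (by decide)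
  obtain ⟨AF, n3, hF⟩ := T_app_closed n2 (by decide)
  have hv := T_var_inv n3
  simp only [List.cons.injEq, Prod.mk.injEq] at hv
  obtain ⟨⟨-, rfl⟩, -⟩ := hv
  exact ⟨AF, AT, AG, R, rfl, hF, hT, hG⟩

/-! ### Positive typings -/

theorem T_I_ty (X : Ty) : T [] ITm (.arrow X X) := T.lam (T.var 0 X)

def TTy (a b c : Ty) : Ty := .arrow a (.arrow b (.arrow (.arrow a (.arrow b c)) c))
def FTy (a b c : Ty) : Ty := .arrow a (.arrow b (.arrow (.arrow b (.arrow a c)) c))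
def GTy (F c1 c2 c3 R : Ty) : Ty :=
  .arrow (.arrow c1 c1) (.arrow (.arrow c2 c2) (.arrow (.arrow c3 c3) (.arrow F R)))

theorem T_true_ty (a b c : Ty) : T [] TrueHM (TTy a b c) := by
  refine T.lam (T.lam (T.lam ?_))
  refine T.app (Γ₁ := [(2, .arrow a (.arrow b c)), (0, a)]) (Γ₂ := [(1, b)])
      (List.Perm.cons _ (List.Perm.swap _ _ _)) ?_ (T.var 1 b)
  exact T.app (Γ₁ := [(2, .arrow a (.arrow b c))]) (Γ₂ := [(0, a)])
      (List.Perm.refl _) (T.var 2 _) (T.var 0 a)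

theorem T_false_ty (a b c : Ty) : T [] FalseHM (FTy a b c) := by
  refine T.lam (T.lam (T.lam ?_))
  refine T.app (Γ₁ := [(2, .arrow b (.arrow a c)), (1, b)]) (Γ₂ := [(0, a)])
      (List.Perm.refl _) ?_ (T.var 0 a)
  exact T.app (Γ₁ := [(2, .arrow b (.arrow a c))]) (Γ₂ := [(1, b)])
      (List.Perm.refl _) (T.var 2 _) (T.var 1 b)

theorem T_G_ty (F c1 c2 c3 R : Ty) :
    T [] GTm (.arrow F (.arrow (GTy F c1 c2 c3 R) R)) := by
  refine T.lam (T.lam ?_)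
  have h0 : T [(4, GTy F c1 c2 c3 R)] (.var 4) (GTy F c1 c2 c3 R) := T.var 4 _
  have h1 := T.app (Γ := [(4, GTy F c1 c2 c3 R)]) (by simp) h0 (T_I_ty c1)
  have h2 := T.app (Γ := [(4, GTy F c1 c2 c3 R)]) (by simp) h1 (T_I_ty c2)
  have h3 := T.app (Γ := [(4, GTy F c1 c2 c3 R)]) (by simp) h2 (T_I_ty c3)
  exact T.app (List.Perm.refl _) h3 (T.var 3 F)

theorem T_notPoly_ty (a b c d e f F c1 c2 c3 R' R : Ty) :
    T [] NotPoly (.arrow (.arrow (FTy a b c) (.arrow (TTy d e f)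
      (.arrow (.arrow F (.arrow (GTy F c1 c2 c3 R') R')) R))) R) := by
  show T [] (.lam 5 (.app (.app (.app (.var 5) FalseHM) TrueHM) GTm)) _
  refine T.lam ?_
  have P := Ty.arrow (FTy a b c) (.arrow (TTy d e f)
      (.arrow (.arrow F (.arrow (GTy F c1 c2 c3 R') R')) R))
  have h0 : T [(5, Ty.arrow (FTy a b c) (.arrow (TTy d e f)
      (.arrow (.arrow F (.arrow (GTy F c1 c2 c3 R') R')) R)))] (.var 5) _ := T.var 5 _
  have h1 := T.app (Γ := [(5, Ty.arrow (FTy a b c) (.arrow (TTy d e f)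
      (.arrow (.arrow F (.arrow (GTy F c1 c2 c3 R') R')) R)))]) (by simp) h0 (T_false_ty a b c)
  have h2 := T.app (Γ := [(5, Ty.arrow (FTy a b c) (.arrow (TTy d e f)
      (.arrow (.arrow F (.arrow (GTy F c1 c2 c3 R') R')) R)))]) (by simp) h1 (T_true_ty d e f)
  exact T.app (Γ := [(5, Ty.arrow (FTy a b c) (.arrow (TTy d e f)
      (.arrow (.arrow F (.arrow (GTy F c1 c2 c3 R') R')) R)))]) (by simp) h2 (T_G_ty F c1 c2 c3 R')

/-! ### Type substitution preserves typing -/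

theorem Typed.tsubst {Γ t A} (h : Typed Γ t A) (θ : ℕ → Ty) :
    Typed (CtxtSubst Γ θ) t (A.subst θ) := by
  induction h with
  | var x A => exact Typed.var x (A.subst θ)
  | exch Γ Δ x y A B t C h ih =>
      have := Typed.exch (CtxtSubst Γ θ) (CtxtSubst Δ θ) x y (A.subst θ) (B.subst θ) t (C.subst θ) ?_
      · simpa [CtxtSubst] using this
      · simpa [CtxtSubst] using ih
  | lam x A Γ t B h ih => exact Typed.lam x (A.subst θ) _ t _ ih
  | app Γ Δ t s A B h1 h2 ih1 ih2 =>
      have := Typed.app (CtxtSubst Γ θ) (CtxtSubst Δ θ) t s _ _ ih1 ih2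
      simpa [CtxtSubst] using this
  | pair Γ Δ s t A B h1 h2 ih1 ih2 =>
      have := Typed.pair (CtxtSubst Γ θ) (CtxtSubst Δ θ) s t _ _ ih1 ih2
      simpa [CtxtSubst, Ty.subst] using this
  | letp Γ Δ s t x y A B C h1 h2 ih1 ih2 =>
      have := Typed.letp (CtxtSubst Γ θ) (CtxtSubst Δ θ) s t x y
        (A.subst θ) (B.subst θ) (C.subst θ) ?_ ?_
      · simpa [CtxtSubst] using this
      · exact ih1
      · simpa [CtxtSubst] using ih2

/-! ### Principal types -/

def PTTrue : Ty :=
  .arrow (.tvar 100) (.arrow (.tvar 101)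
    (.arrow (.arrow (.tvar 100) (.arrow (.tvar 101) (.tvar 102))) (.tvar 102)))

def PTFalse : Ty :=
  .arrow (.tvar 100) (.arrow (.tvar 101)
    (.arrow (.arrow (.tvar 101) (.arrow (.tvar 100) (.tvar 102))) (.tvar 102)))

def PTNot : Ty :=
  .arrow (.arrow
    (.arrow (.tvar 0) (.arrow (.tvar 1) (.arrow (.arrow (.tvar 1) (.arrow (.tvar 0) (.tvar 2))) (.tvar 2))))
    (.arrow (.arrow (.tvar 3) (.arrow (.tvar 4) (.arrow (.arrow (.tvar 3) (.arrow (.tvar 4) (.tvar 5))) (.tvar 5))))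
      (.arrow (.arrow (.tvar 6) (.arrow
          (.arrow (.arrow (.tvar 7) (.tvar 7)) (.arrow (.arrow (.tvar 8) (.tvar 8))
            (.arrow (.arrow (.tvar 9) (.tvar 9)) (.arrow (.tvar 6) (.tvar 10)))))
          (.tvar 10)))
        (.tvar 11)))) (.tvar 11)

theorem isPT_true : IsPT TrueHM PTTrue := by
  constructor
  · exact typed_of_T (T_true_ty (.tvar 100) (.tvar 101) (.tvar 102))
  · intro A' h
    obtain ⟨a, b, c, rfl⟩ := T_true_inv (T_of_typed h)
    refine ⟨fun n => if n = 100 then a else if n = 101 then b else c, ?_⟩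
    simp [PTTrue, Ty.subst]

theorem isPT_false : IsPT FalseHM PTFalse := by
  constructor
  · exact typed_of_T (T_false_ty (.tvar 100) (.tvar 101) (.tvar 102))
  · intro A' h
    obtain ⟨a, b, c, rfl⟩ := T_false_inv (T_of_typed h)
    refine ⟨fun n => if n = 100 then a else if n = 101 then b else c, ?_⟩
    simp [PTFalse, Ty.subst]

theorem isPT_not : IsPT NotPoly PTNot := by
  constructor
  · exact typed_of_T (T_notPoly_ty (.tvar 0) (.tvar 1) (.tvar 2) (.tvar 3) (.tvar 4)
      (.tvar 5) (.tvar 6) (.tvar 7) (.tvar 8) (.tvar 9) (.tvar 10) (.tvar 11))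
  · intro A' h
    obtain ⟨AF, AT, AG, R, rfl, hF, hT, hG⟩ := T_notPoly_inv (T_of_typed h)
    obtain ⟨a, b, c, rfl⟩ := T_false_inv hF
    obtain ⟨d, e, f, rfl⟩ := T_true_inv hT
    obtain ⟨F, c1, c2, c3, R', rfl⟩ := T_G_inv hG
    refine ⟨fun n =>
      if n = 0 then a else if n = 1 then b else if n = 2 then c else
      if n = 3 then d else if n = 4 then e else if n = 5 then f else
      if n = 6 then F else if n = 7 then c1 else if n = 8 then c2 else
      if n = 9 then c3 else if n = 10 then R' else R, ?_⟩
    simp [PTNot, Ty.subst]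

/-! ### Concrete substitutions for poly-typability -/

def ETy : Ty := .arrow BHM BHM

def ThT : ℕ → Ty := fun n =>
  if n ≤ 2 then .tvar 0 else
  if n = 3 then .arrow ETy ETy else
  if n = 4 then ETy else
  if n = 5 then ETy else
  if n = 6 then BHM else
  if n = 7 then ETy else
  if n = 8 then BHM else
  if n = 9 then .arrow ETy ETy else
  if n = 10 then BHM else
  if n = 11 then BHM else
  if n = 100 then BHM else
  if n = 101 then TTy (.arrow ETy ETy) ETy ETy else
  if n = 102 then BHM else .tvar n

def ThF : ℕ → Ty := fun n =>
  if n = 0 then ETy else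
  if n = 1 then .arrow ETy ETy else
  if n = 2 then ETy else
  if n ≤ 5 then .tvar 0 else
  if n = 6 then BHM else
  if n = 7 then BHM else
  if n = 8 then ETy else
  if n = 9 then .arrow ETy ETy else
  if n = 10 then BHM else
  if n = 11 then BHM else
  if n = 100 then FTy ETy (.arrow ETy ETy) ETy else
  if n = 101 then BHM else
  if n = 102 then BHM else .tvar n

def A0T : Ty := PTTrue.subst ThT
def A0F : Ty := PTFalse.subst ThF

theorem substT_eq : PTNot.subst ThT = .arrow A0T BHM := by decide
theorem substF_eq : PTNot.subst ThF = .arrow A0F BHM := by decide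

theorem typed_true_bhm : Typed [] TrueHM BHM := by
  have h := isPT_true.1.tsubst (fun _ => Ty.tvar 0)
  have e : PTTrue.subst (fun _ => Ty.tvar 0) = BHM := by decide
  rw [e] at h; exact h

theorem typed_false_bhm : Typed [] FalseHM BHM := by
  have h := isPT_false.1.tsubst (fun _ => Ty.tvar 0)
  have e : PTFalse.subst (fun _ => Ty.tvar 0) = BHM := by decide
  rw [e] at h; exact h

theorem typed_not_T : Typed [] NotPoly (.arrow A0T BHM) := by
  have h := isPT_not.1.tsubst ThT
  rw [substT_eq] at h; exact h

theorem typed_not_F : Typed [] NotPoly (.arrow A0F BHM) := by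
  have h := isPT_not.1.tsubst ThF
  rw [substF_eq] at h; exact h

theorem typed_true_A0T : Typed [] TrueHM A0T := isPT_true.1.tsubst ThT
theorem typed_false_A0F : Typed [] FalseHM A0F := isPT_false.1.tsubst ThF

/-! ### Reductions -/

theorem bstep (C : Cx) {a b : Tm} (h : StepBase a b) {t u : Tm}
    (ht : t = C.plug a) (hu : u = C.plug b) : BEqc t u :=
  Relation.EqvGen.rel t u ⟨C, a, b, Or.inr ⟨a, b, Relation.EqvGen.refl a,
    ⟨Cx.hole, a, b, h, rfl, rfl⟩, Relation.EqvGen.refl b⟩, ht, hu⟩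

theorem beqc_trans {a b c : Tm} (h1 : BEqc a b) (h2 : BEqc b c) : BEqc a c :=
  Relation.EqvGen.trans a b c h1 h2

theorem red_true : BEqc (.app NotPoly TrueHM) FalseHM := by
  refine beqc_trans (b := .app (.app (.app TrueHM FalseHM) TrueHM) GTm)
    (bstep .hole
    (.beta1 5 (.app (.app (.app (.var 5) FalseHM) TrueHM) GTm) TrueHM)
    (by decide) (by decide)) ?_
  refine beqc_trans (b := .app (.app (.lam 1 (.lam 2 (.app (.app (.var 2) FalseHM) (.var 1)))) TrueHM) GTm)
    (bstep (.appL (.appL .hole TrueHM) GTm)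
    (.beta1 0 (.lam 1 (.lam 2 (.app (.app (.var 2) (.var 0)) (.var 1)))) FalseHM)
    (by decide) (by decide)) ?_
  refine beqc_trans (b := .app (.lam 2 (.app (.app (.var 2) FalseHM) TrueHM)) GTm)
    (bstep (.appL .hole GTm)
    (.beta1 1 (.lam 2 (.app (.app (.var 2) FalseHM) (.var 1))) TrueHM)
    (by decide) (by decide)) ?_
  refine beqc_trans (b := .app (.app GTm FalseHM) TrueHM)
    (bstep .hole (.beta1 2 (.app (.app (.var 2) FalseHM) TrueHM) GTm)
    (by decide) (by decide)) ?_
  refine beqc_trans (b := .app (.lam 4 (.app (.app (.app (.app (.var 4) ITm) ITm) ITm) FalseHM)) TrueHM)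
    (bstep (.appL .hole TrueHM)
    (.beta1 3 (.lam 4 (.app (.app (.app (.app (.var 4) ITm) ITm) ITm) (.var 3))) FalseHM)
    (by decide) (by decide)) ?_
  refine beqc_trans (b := .app (.app (.app (.app TrueHM ITm) ITm) ITm) FalseHM)
    (bstep .hole (.beta1 4 (.app (.app (.app (.app (.var 4) ITm) ITm) ITm) FalseHM) TrueHM)
    (by decide) (by decide)) ?_
  refine beqc_trans (b := .app (.app (.app (.lam 1 (.lam 2 (.app (.app (.var 2) ITm) (.var 1)))) ITm) ITm) FalseHM)
    (bstep (.appL (.appL (.appL .hole ITm) ITm) FalseHM)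
    (.beta1 0 (.lam 1 (.lam 2 (.app (.app (.var 2) (.var 0)) (.var 1)))) ITm)
    (by decide) (by decide)) ?_
  refine beqc_trans (b := .app (.app (.lam 2 (.app (.app (.var 2) ITm) ITm)) ITm) FalseHM)
    (bstep (.appL (.appL .hole ITm) FalseHM)
    (.beta1 1 (.lam 2 (.app (.app (.var 2) ITm) (.var 1))) ITm)
    (by decide) (by decide)) ?_
  refine beqc_trans (b := .app (.app (.app ITm ITm) ITm) FalseHM)
    (bstep (.appL .hole FalseHM)
    (.beta1 2 (.app (.app (.var 2) ITm) ITm) ITm)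
    (by decide) (by decide)) ?_
  refine beqc_trans (b := .app (.app ITm ITm) FalseHM)
    (bstep (.appL (.appL .hole ITm) FalseHM) (.beta1 0 (.var 0) ITm)
    (by decide) (by decide)) ?_
  refine beqc_trans (b := .app ITm FalseHM)
    (bstep (.appL .hole FalseHM) (.beta1 0 (.var 0) ITm)
    (by decide) (by decide)) ?_
  exact bstep .hole (.beta1 0 (.var 0) FalseHM) (by decide) (by decide)

theorem red_false : BEqc (.app NotPoly FalseHM) TrueHM := by
  refine beqc_trans (b := .app (.app (.app FalseHM FalseHM) TrueHM) GTm)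
    (bstep .hole
    (.beta1 5 (.app (.app (.app (.var 5) FalseHM) TrueHM) GTm) FalseHM)
    (by decide) (by decide)) ?_
  refine beqc_trans (b := .app (.app (.lam 1 (.lam 2 (.app (.app (.var 2) (.var 1)) FalseHM))) TrueHM) GTm)
    (bstep (.appL (.appL .hole TrueHM) GTm)
    (.beta1 0 (.lam 1 (.lam 2 (.app (.app (.var 2) (.var 1)) (.var 0)))) FalseHM)
    (by decide) (by decide)) ?_
  refine beqc_trans (b := .app (.lam 2 (.app (.app (.var 2) TrueHM) FalseHM)) GTm)
    (bstep (.appL .hole GTm)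
    (.beta1 1 (.lam 2 (.app (.app (.var 2) (.var 1)) FalseHM)) TrueHM)
    (by decide) (by decide)) ?_
  refine beqc_trans (b := .app (.app GTm TrueHM) FalseHM)
    (bstep .hole (.beta1 2 (.app (.app (.var 2) TrueHM) FalseHM) GTm)
    (by decide) (by decide)) ?_
  refine beqc_trans (b := .app (.lam 4 (.app (.app (.app (.app (.var 4) ITm) ITm) ITm) TrueHM)) FalseHM)
    (bstep (.appL .hole FalseHM)
    (.beta1 3 (.lam 4 (.app (.app (.app (.app (.var 4) ITm) ITm) ITm) (.var 3))) TrueHM)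
    (by decide) (by decide)) ?_
  refine beqc_trans (b := .app (.app (.app (.app FalseHM ITm) ITm) ITm) TrueHM)
    (bstep .hole (.beta1 4 (.app (.app (.app (.app (.var 4) ITm) ITm) ITm) TrueHM) FalseHM)
    (by decide) (by decide)) ?_
  refine beqc_trans (b := .app (.app (.app (.lam 1 (.lam 2 (.app (.app (.var 2) (.var 1)) ITm))) ITm) ITm) TrueHM)
    (bstep (.appL (.appL (.appL .hole ITm) ITm) TrueHM)
    (.beta1 0 (.lam 1 (.lam 2 (.app (.app (.var 2) (.var 1)) (.var 0)))) ITm)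
    (by decide) (by decide)) ?_
  refine beqc_trans (b := .app (.app (.lam 2 (.app (.app (.var 2) ITm) ITm)) ITm) TrueHM)
    (bstep (.appL (.appL .hole ITm) TrueHM)
    (.beta1 1 (.lam 2 (.app (.app (.var 2) (.var 1)) ITm)) ITm)
    (by decide) (by decide)) ?_
  refine beqc_trans (b := .app (.app (.app ITm ITm) ITm) TrueHM)
    (bstep (.appL .hole TrueHM)
    (.beta1 2 (.app (.app (.var 2) ITm) ITm) ITm)
    (by decide) (by decide)) ?_
  refine beqc_trans (b := .app (.app ITm ITm) TrueHM)
    (bstep (.appL (.appL .hole ITm) TrueHM) (.beta1 0 (.var 0) ITm)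
    (by decide) (by decide)) ?_
  refine beqc_trans (b := .app ITm TrueHM)
    (bstep (.appL .hole TrueHM) (.beta1 0 (.var 0) ITm)
    (by decide) (by decide)) ?_
  exact bstep .hole (.beta1 0 (.var 0) TrueHM) (by decide) (by decide)

theorem notPoly_example' :
    (PolyTypableN NotPoly [BHM] BHM [TrueHM] ∧ PolyTypableN NotPoly [BHM] BHM [FalseHM] ∧
      Typed [] (.app NotPoly TrueHM) BHM ∧ Typed [] (.app NotPoly FalseHM) BHM) ∧
    (BEqc (.app NotPoly TrueHM) FalseHM ∧ BEqc (.app NotPoly FalseHM) TrueHM) ∧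
    ¬ Typed [] NotPoly (Ty.arrow BHM BHM) := by
  refine ⟨⟨?_, ?_, ?_, ?_⟩, ⟨red_true, red_false⟩, ?_⟩
  · exact ⟨⟨[A0T], BHM, rfl, typed_not_T⟩,
      List.Forall₂.cons typed_true_bhm List.Forall₂.nil,
      ThT, PTNot, [A0T], isPT_not, substT_eq,
      List.Forall₂.cons ⟨PTTrue, isPT_true, rfl⟩ List.Forall₂.nil⟩
  · exact ⟨⟨[A0F], BHM, rfl, typed_not_F⟩,
      List.Forall₂.cons typed_false_bhm List.Forall₂.nil,
      ThF, PTNot, [A0F], isPT_not, substF_eq,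
      List.Forall₂.cons ⟨PTFalse, isPT_false, rfl⟩ List.Forall₂.nil⟩
  · exact Typed.app [] [] NotPoly TrueHM A0T BHM typed_not_T typed_true_A0T
  · exact Typed.app [] [] NotPoly FalseHM A0F BHM typed_not_F typed_false_A0F
  · intro h
    obtain ⟨AF, AT, AG, R, hC, hF, -, -⟩ := T_notPoly_inv (T_of_typed h)
    simp only [BHM] at hC
    injection hC with h1 h2
    injection h1 with hAF hrest
    obtain ⟨a, b, c, hsh⟩ := T_false_inv hF
    rw [← hAF] at hsh
    simp at hsh
/-- **Not_POLY example.** `Not_POLY` is poly-typable by `B_HM -> B_HM` with respect to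
`True` and with respect to `False` (so `Not_POLY True` and `Not_POLY False` are
well-typed closed terms of type `B_HM`), `Not_POLY True =βηc False`,
`Not_POLY False =βηc True`, and yet `⊢ Not_POLY : B_HM -> B_HM` is not derivable. -/
theorem notPoly_example :
    (PolyTypableN NotPoly [BHM] BHM [TrueHM] ∧ PolyTypableN NotPoly [BHM] BHM [FalseHM] ∧
      Typed [] (.app NotPoly TrueHM) BHM ∧ Typed [] (.app NotPoly FalseHM) BHM) ∧
    (BEqc (.app NotPoly TrueHM) FalseHM ∧ BEqc (.app NotPoly FalseHM) TrueHM) ∧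
    ¬ Typed [] NotPoly (Ty.arrow BHM BHM) := by
  exact notPoly_example'
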